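/- Let (T, f) be a depth-decomposition of a vector matroid M = (X, I) such that T is not a rooted path and each primary branch of T is at capacity. Let S_1, ..., S_k be the primary branches of T, let A_1, ..., A_k be the linear hulls of Ŝ_1, ..., Ŝ_k respectively, and let h be the depth of the common root of S_1, ..., S_k in T. Then there exists a subspace K of dimension h such that A_i ∩ A_j = K for all 1 ≤ i < j ≤ k. -/
import Mathlib


/-! Infrastructure: rooted trees, depth-decompositions and branch-depth of matroids,
following the definitions of Kardoš, Král', Liebenau, Mach and of the paper
"Optimal matrix tree-depth and a row-invariant parameterized algorithm for
integer programming". -/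

/-- A rooted tree on a (nonempty) finite vertex type `V`, given by its root and its
parent function: the parent of the root is the root itself, and from any vertex the
root is reached by iterating the parent function. -/
structure RTree (V : Type) [Fintype V] [DecidableEq V] where
  root : V
  parent : V → V
  parent_root : parent root = root
  reach : ∀ v : V, ∃ n : ℕ, parent^[n] v = root

namespace RTree

variable {V : Type} [Fintype V] [DecidableEq V]

/-- A vertex is a leaf if it has no children. -/
def IsLeaf (T : RTree V) (v : V) : Prop :=
  ∀ u : V, T.parent u = v → u = v

/-- The non-root vertices on the path from `v` to the root of `T`; they are in bijective
correspondence with the edges of this path (each such vertex corresponds to the edge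
joining it to its parent). -/
def pathEdges (T : RTree V) (v : V) : Set V :=
  {u | u ≠ T.root ∧ ∃ n : ℕ, T.parent^[n] v = u}

/-- The number of edges of the tree. -/
def edgeCount (T : RTree V) : ℕ := Fintype.card V - 1

/-- The depth of a vertex: the number of edges on the path from the root to it. -/
noncomputable def depthV (T : RTree V) (v : V) : ℕ :=
  sInf {n : ℕ | T.parent^[n] v = T.root}

/-- The depth of the tree: the maximum number of edges on a path from the root to a leaf. -/
noncomputable def depth (T : RTree V) : ℕ :=
  Finset.univ.sup T.depthV

/-- The descendants of a vertex `u` (including `u` itself). -/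
def desc (T : RTree V) (u : V) : Set V := {w | ∃ n : ℕ, T.parent^[n] w = u}

/-- The number of children of a vertex. -/
noncomputable def childCount (T : RTree V) (u : V) : ℕ :=
  {w : V | T.parent w = u ∧ w ≠ u}.ncard

/-- A rooted tree is a rooted path if every vertex has at most one child. -/
def IsRootedPath (T : RTree V) : Prop := ∀ u : V, T.childCount u ≤ 1

/-- `a` is a strict ancestor of `v`. -/
def IsStrictAncestor (T : RTree V) (a v : V) : Prop :=
  a ≠ v ∧ ∃ n : ℕ, T.parent^[n] v = a

/-- A branch of `T` consists of a vertex `u`, exactly one child `u'` of `u` and all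
descendants of `u'`; it is hence determined by the non-root vertex `u'` and denoted
here by `u'`.  Its root is `parent u'`, its vertex set is `{parent u'} ∪ desc u'`, and
its edge number `‖S‖` is `(desc u').ncard`.  The branch determined by `u'` is primary
if its root has at least two children and every (strict) ancestor of its root has
exactly one child. -/
def IsPrimaryBranch (T : RTree V) (u' : V) : Prop :=
  u' ≠ T.root ∧ 2 ≤ T.childCount (T.parent u') ∧
    ∀ a : V, T.IsStrictAncestor a (T.parent u') → T.childCount a = 1

end RTree

/-- `(T, f)` is a depth-decomposition of the matroid on ground set `X` with rank
function `rk` and rank `r`: `f` maps elements of the matroid to leaves of `T`, the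
number of edges of `T` equals the rank `r` of the matroid, and the rank of every
`X' ⊆ X` is at most the number of edges contained in the union of the paths in `T`
from the root to the vertices `f x`, `x ∈ X'`. -/
def IsDepthDecompOn {X V : Type} [Fintype V] [DecidableEq V]
    (rk : Set X → ℕ) (r : ℕ) (T : RTree V) (f : X → V) : Prop :=
  (∀ x : X, T.IsLeaf (f x)) ∧ T.edgeCount = r ∧
    ∀ X' : Set X, rk X' ≤ (⋃ x ∈ X', T.pathEdges (f x)).ncard

/-- The branch-depth of the matroid on ground set `X` with rank function `rk` and
rank `r`: the smallest depth of a rooted tree forming a depth-decomposition. -/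
noncomputable def branchDepth {X : Type} (rk : Set X → ℕ) (r : ℕ) : ℕ :=
  sInf {d : ℕ | ∃ (nV : ℕ) (T : RTree (Fin (nV + 1))) (f : X → Fin (nV + 1)),
    IsDepthDecompOn rk r T f ∧ T.depth = d}

/-- The branch of `T` determined by the non-root vertex `u'` is at capacity: the rank
of the set `Ŝ` of matroid elements mapped by `f` to the leaves of the branch equals the
number `‖S‖` of edges of the branch plus the number of edges on the path from the root
of `T` to the root of the branch. -/
def AtCapacity {X V : Type} [Fintype V] [DecidableEq V]
    (rk : Set X → ℕ) (T : RTree V) (f : X → V) (u' : V) : Prop :=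
  rk {x | f x ∈ T.desc u'} = (T.desc u').ncard + T.depthV (T.parent u')

/-- The rank function of the vector matroid formed by the family of vectors `v`:
the rank of a subset is the dimension of its linear hull. -/
noncomputable def vecRk (F : Type) {W ι : Type} [Field F] [AddCommGroup W] [Module F W]
    (v : ι → W) (S : Set ι) : ℕ :=
  Module.finrank F (Submodule.span F (v '' S))

/-- `(T, f, g)` is an extended depth-decomposition of the vector matroid formed by the
family of vectors `v`: `(T, f)` is a depth-decomposition, the images under `g` of the
non-root vertices of `T` form a basis of the linear hull of the vectors, and every
vector `v x` lies in the linear hull of the `g`-image of the non-root vertices on the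
path from `f x` to the root. -/
def IsExtDepthDecomp (F : Type) {W ι V : Type} [Field F] [AddCommGroup W] [Module F W]
    [Fintype V] [DecidableEq V] (v : ι → W) (T : RTree V) (f : ι → V) (g : V → W) : Prop :=
  IsDepthDecompOn (vecRk F v) (vecRk F v Set.univ) T f ∧
  LinearIndependent F (fun u : {u : V // u ≠ T.root} => g u.val) ∧
  Submodule.span F (g '' {u : V | u ≠ T.root}) = Submodule.span F (Set.range v) ∧
  ∀ x : ι, v x ∈ Submodule.span F (g '' T.pathEdges (f x))
namespace RTree

variable {V : Type} [Fintype V] [DecidableEq V] (T : RTree V)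

lemma depthV_spec (v : V) : T.parent^[T.depthV v] v = T.root := by
  have h : {n : ℕ | T.parent^[n] v = T.root}.Nonempty := T.reach v
  exact Nat.sInf_mem h

lemma depthV_le {v : V} {n : ℕ} (h : T.parent^[n] v = T.root) : T.depthV v ≤ n :=
  Nat.sInf_le h

lemma depthV_eq_zero_iff {v : V} : T.depthV v = 0 ↔ v = T.root := by
  constructor
  · intro h
    have := T.depthV_spec v
    rwa [h] at this
  · intro h
    subst h
    exact Nat.le_zero.mp (T.depthV_le (by simp))

lemma parent_eq_self_iff {v : V} : T.parent v = v ↔ v = T.root := by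
  constructor
  · intro h
    have h2 : ∀ n, T.parent^[n] v = v := by
      intro n; exact Function.iterate_fixed h n
    have := T.depthV_spec v
    rw [h2] at this; exact this
  · intro h; subst h; exact T.parent_root

lemma depthV_parent {v : V} (h : v ≠ T.root) : T.depthV (T.parent v) + 1 = T.depthV v := by
  have hpos : 0 < T.depthV v := by
    rcases Nat.eq_zero_or_pos (T.depthV v) with h0 | h0
    · exact absurd (T.depthV_eq_zero_iff.mp h0) h
    · exact h0
  have h1 : T.depthV v ≤ T.depthV (T.parent v) + 1 := by
    apply T.depthV_le
    rw [Function.iterate_succ_apply]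
    exact T.depthV_spec (T.parent v)
  have h2 : T.depthV (T.parent v) ≤ T.depthV v - 1 := by
    apply T.depthV_le
    have := T.depthV_spec v
    rwa [show T.depthV v = (T.depthV v - 1) + 1 by omega, Function.iterate_succ_apply] at this
  omega

lemma depthV_iterate {v : V} {n : ℕ} (h : n ≤ T.depthV v) :
    T.depthV (T.parent^[n] v) = T.depthV v - n := by
  induction n with
  | zero => simp
  | succ m ih =>
    have hm : m ≤ T.depthV v := by omega
    have hne : T.parent^[m] v ≠ T.root := by
      intro hroot
      have := T.depthV_le hroot
      omega
    have := T.depthV_parent hne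
    rw [Function.iterate_succ_apply']
    rw [ih hm] at *
    omega

lemma iterate_eq_root {v : V} {n : ℕ} (h : T.depthV v ≤ n) : T.parent^[n] v = T.root := by
  have : T.parent^[n] v = T.parent^[n - T.depthV v] (T.parent^[T.depthV v] v) := by
    rw [← Function.iterate_add_apply]
    congr 1; omega
  rw [this, T.depthV_spec v]
  exact Function.iterate_fixed T.parent_root _

lemma iterate_ne_root {v : V} {n : ℕ} (h : T.parent^[n] v ≠ T.root) : n < T.depthV v := by
  by_contra hc
  exact h (T.iterate_eq_root (by omega))

/-- If `parent^[n] w = u` with `u ≠ root`, then `n` is determined. -/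
lemma iterate_depth_eq {w u : V} {n : ℕ} (h : T.parent^[n] w = u) (hu : u ≠ T.root) :
    n = T.depthV w - T.depthV u ∧ T.depthV u ≤ T.depthV w := by
  have hn : n < T.depthV w := T.iterate_ne_root (h ▸ hu)
  have := T.depthV_iterate (v := w) (n := n) (by omega)
  rw [h] at this
  omega

/-- `b` has the "spine" property. -/
def Spined (b : V) : Prop := ∀ a : V, T.IsStrictAncestor a b → T.childCount a = 1

lemma childCount_pos_of_child {a c : V} (hc : T.parent c = a) (hne : c ≠ a) :
    1 ≤ T.childCount a := by
  have : ({w : V | T.parent w = a ∧ w ≠ a}).Nonempty := ⟨c, hc, hne⟩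
  have hfin : ({w : V | T.parent w = a ∧ w ≠ a}).Finite := Set.toFinite _
  exact (Set.ncard_pos hfin).mpr this

lemma strict_ancestor_spec {a b : V} (h : T.IsStrictAncestor a b) :
    T.depthV a < T.depthV b ∧ T.parent^[T.depthV b - T.depthV a] b = a := by
  obtain ⟨hne, n, hn⟩ := h
  by_cases ha : a = T.root
  · subst ha
    have h0 : T.depthV T.root = 0 := T.depthV_eq_zero_iff.mpr rfl
    have hb : T.depthV b ≠ 0 := fun hb => hne (T.depthV_eq_zero_iff.mp hb).symm
    rw [h0]
    exact ⟨by omega, by simpa using T.depthV_spec b⟩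
  · obtain ⟨hn', hle⟩ := T.iterate_depth_eq hn ha
    have : T.depthV a ≠ T.depthV b := by
      intro he
      rw [he] at hn'
      simp [hn', show T.depthV b - T.depthV b = 0 by omega] at hn
      exact hne hn.symm
    subst hn'
    exact ⟨by omega, hn⟩

lemma strict_ancestor_childCount_pos {a b : V} (h : T.IsStrictAncestor a b) :
    1 ≤ T.childCount a := by
  obtain ⟨hlt, hit⟩ := T.strict_ancestor_spec h
  set m := T.depthV b - T.depthV a with hm
  have hm1 : m - 1 ≤ T.depthV b := by omega
  set c := T.parent^[m - 1] b with hcdef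
  have hdc : T.depthV c = T.depthV a + 1 := by
    rw [hcdef, T.depthV_iterate hm1]; omega
  have hca : T.parent c = a := by
    have : T.parent^[m - 1 + 1] b = a := by rw [show m - 1 + 1 = m by omega]; exact hit
    rw [Function.iterate_succ_apply'] at this
    exact this
  exact T.childCount_pos_of_child hca (by intro he; rw [he] at hdc; omega)

/-- Under the spine property, the vertex at each depth `≤ depthV b` is unique:
it is the corresponding ancestor of `b`. -/
lemma spined_unique_at_depth {b : V} (hb : T.Spined b) :
    ∀ d : ℕ, d ≤ T.depthV b → ∀ w : V, T.depthV w = d →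
      w = T.parent^[T.depthV b - d] b := by
  intro d
  induction d with
  | zero =>
    intro _ w hw
    rw [T.depthV_eq_zero_iff.mp hw, Nat.sub_zero, T.depthV_spec b]
  | succ e ih =>
    intro hd w hw
    have hwne : w ≠ T.root := by
      intro hr; rw [hr] at hw; rw [T.depthV_eq_zero_iff.mpr rfl] at hw; omega
    have hpw : T.depthV (T.parent w) = e := by have := T.depthV_parent hwne; omega
    have h1 : T.parent w = T.parent^[T.depthV b - e] b := ih (by omega) _ hpw
    -- the next spine vertex
    set a := T.parent^[T.depthV b - e] b with ha
    set c := T.parent^[T.depthV b - (e+1)] b with hc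
    have hdc : T.depthV c = e + 1 := by
      rw [hc, T.depthV_iterate (by omega)]; omega
    have hda : T.depthV a = e := by
      rw [ha, T.depthV_iterate (by omega)]; omega
    have hpc : T.parent c = a := by
      have : T.parent^[T.depthV b - (e+1) + 1] b = a := by
        rw [show T.depthV b - (e+1) + 1 = T.depthV b - e by omega]
      rw [Function.iterate_succ_apply'] at this
      exact this
    by_cases hab : a = b
    · -- then e = depthV b, contradicting e + 1 ≤ depthV b
      rw [hab] at hda; omega
    · have hsa : T.IsStrictAncestor a b := ⟨hab, _, ha.symm⟩
      have hcc : T.childCount a = 1 := hb a hsa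
      obtain ⟨z, hz⟩ := Set.ncard_eq_one.mp hcc
      have hwz : w ∈ {w : V | T.parent w = a ∧ w ≠ a} := ⟨h1, by intro he; rw [he] at hw; omega⟩
      have hcz : c ∈ {w : V | T.parent w = a ∧ w ≠ a} := ⟨hpc, by intro he; rw [he] at hdc; omega⟩
      rw [hz] at hwz hcz
      rw [Set.mem_singleton_iff.mp hwz, ← Set.mem_singleton_iff.mp hcz]

/-- Under the spine property, deep vertices have `b` as ancestor. -/
lemma spined_ancestor_of_deep {b : V} (hb : T.Spined b) {w : V}
    (hw : T.depthV b ≤ T.depthV w) :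
    T.parent^[T.depthV w - T.depthV b] w = b := by
  set m := T.depthV w - T.depthV b with hm
  have hdm : T.depthV (T.parent^[m] w) = T.depthV b := by
    rw [T.depthV_iterate (by omega)]; omega
  have := T.spined_unique_at_depth hb (T.depthV b) le_rfl _ hdm
  simpa using this

/-- If `T` is not a rooted path, there is a minimal-depth vertex with at least 2
children, and it is spined. -/
lemma exists_branching (hnp : ¬ T.IsRootedPath) :
    ∃ b : V, 2 ≤ T.childCount b ∧ T.Spined b := by
  classical
  rw [RTree.IsRootedPath] at hnp
  push_neg at hnp
  obtain ⟨u0, hu0⟩ := hnp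
  have hu0' : 2 ≤ T.childCount u0 := hu0
  obtain ⟨b, hbmem, hbmin⟩ := Finset.exists_min_image
    (Finset.univ.filter (fun u => 2 ≤ T.childCount u)) T.depthV
    ⟨u0, by simp [hu0']⟩
  simp only [Finset.mem_filter, Finset.mem_univ, true_and] at hbmem
  refine ⟨b, hbmem, ?_⟩
  intro a ha
  have h1 : 1 ≤ T.childCount a := T.strict_ancestor_childCount_pos ha
  have h2 : T.childCount a < 2 := by
    by_contra hc
    have := hbmin a (by simp; omega)
    have := (T.strict_ancestor_spec ha).1
    omega
  omega

/-- A vertex is a primary branch iff it is a child of the branching vertex `b`. -/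
lemma primary_iff_child {b : V} (hb2 : 2 ≤ T.childCount b) (hbs : T.Spined b) (u' : V) :
    T.IsPrimaryBranch u' ↔ T.parent u' = b ∧ u' ≠ b := by
  constructor
  · rintro ⟨hroot, hcc, hanc⟩
    set b' := T.parent u' with hb'
    have hbb' : b' = b := by
      by_contra hne
      rcases le_or_gt (T.depthV b') (T.depthV b) with hle | hlt
      · -- b' is an ancestor of b at its depth
        have := T.spined_unique_at_depth hbs (T.depthV b') hle b' rfl
        have hsa : T.IsStrictAncestor b' b := ⟨hne, _, this.symm⟩
        have := hbs b' hsa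
        omega
      · have hub : T.parent^[T.depthV b' - T.depthV b] b' = b :=
          T.spined_ancestor_of_deep hbs (by omega)
        have hsa : T.IsStrictAncestor b b' := ⟨fun he => hne he.symm, _, hub⟩
        have := hanc b hsa
        omega
    refine ⟨hbb' ▸ rfl, ?_⟩
    intro he
    have : T.parent u' = u' := by rw [← hb', hbb']; exact he.symm
    exact hroot (T.parent_eq_self_iff.mp this)
  · rintro ⟨hpar, hne⟩
    have hroot : u' ≠ T.root := by
      intro hr
      rw [hr] at hpar hne
      exact hne (T.parent_root.symm.trans hpar)
    refine ⟨hroot, by rw [hpar]; exact hb2, ?_⟩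
    intro a ha
    rw [hpar] at ha
    exact hbs a ha

lemma depthV_child {b u' : V} (hpar : T.parent u' = b) (hne : u' ≠ b) :
    T.depthV u' = T.depthV b + 1 := by
  have hroot : u' ≠ T.root := by
    intro hr; rw [hr] at hpar hne; exact hne (T.parent_root.symm.trans hpar)
  have := T.depthV_parent hroot
  rw [hpar] at this
  omega

/-- Membership in `desc u` for non-root `u` is determined by depth. -/
lemma mem_desc_iff {u : V} (hu : u ≠ T.root) {w : V} :
    w ∈ T.desc u ↔ T.depthV u ≤ T.depthV w ∧ T.parent^[T.depthV w - T.depthV u] w = u := by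
  constructor
  · rintro ⟨n, hn⟩
    obtain ⟨rfl, hle⟩ := T.iterate_depth_eq hn hu
    exact ⟨hle, hn⟩
  · rintro ⟨_, hit⟩
    exact ⟨_, hit⟩

lemma mem_pathEdges_iff {b u : V} :
    u ∈ T.pathEdges b ↔ u ≠ T.root ∧ T.depthV u ≤ T.depthV b ∧
      T.parent^[T.depthV b - T.depthV u] b = u := by
  constructor
  · rintro ⟨hne, n, hn⟩
    obtain ⟨rfl, hle⟩ := T.iterate_depth_eq hn hne
    exact ⟨hne, hle, hn⟩
  · rintro ⟨hne, _, hit⟩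
    exact ⟨hne, _, hit⟩

lemma ncard_pathEdges (b : V) : (T.pathEdges b).ncard = T.depthV b := by
  classical
  have hset : T.pathEdges b = ↑((Finset.range (T.depthV b)).image (fun i => T.parent^[i] b)) := by
    ext u
    simp only [Finset.coe_image, Finset.coe_range, Set.mem_image, Set.mem_Iio]
    rw [T.mem_pathEdges_iff]
    constructor
    · rintro ⟨hne, hle, hit⟩
      have hd : 1 ≤ T.depthV u := by
        rcases Nat.eq_zero_or_pos (T.depthV u) with h0 | h0
        · exact absurd (T.depthV_eq_zero_iff.mp h0) hne
        · omega
      exact ⟨T.depthV b - T.depthV u, by omega, hit⟩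
    · rintro ⟨i, hi, rfl⟩
      have hd : T.depthV (T.parent^[i] b) = T.depthV b - i := T.depthV_iterate (by omega)
      refine ⟨?_, by omega, ?_⟩
      · intro hr
        rw [hr, T.depthV_eq_zero_iff.mpr rfl] at hd
        omega
      · rw [hd, show T.depthV b - (T.depthV b - i) = i by omega]
  rw [hset, Set.ncard_coe_finset, Finset.card_image_of_injOn, Finset.card_range]
  intro i hi j hj hij
  simp only [Finset.coe_range, Set.mem_Iio] at hi hj
  simp only at hij
  have h1 : T.depthV (T.parent^[i] b) = T.depthV b - i := T.depthV_iterate (by omega)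
  have h2 : T.depthV (T.parent^[j] b) = T.depthV b - j := T.depthV_iterate (by omega)
  rw [hij] at h1
  omega

lemma depth_of_mem_desc_child {b u' w : V} (hpar : T.parent u' = b) (hne : u' ≠ b)
    (hw : w ∈ T.desc u') :
    T.depthV b + 1 ≤ T.depthV w ∧
      T.parent^[T.depthV w - (T.depthV b + 1)] w = u' := by
  have hroot : u' ≠ T.root := by
    intro hr; rw [hr] at hpar hne; exact hne (T.parent_root.symm.trans hpar)
  have hd : T.depthV u' = T.depthV b + 1 := T.depthV_child hpar hne
  rw [T.mem_desc_iff hroot, hd] at hw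
  exact ⟨hw.1, hw.2⟩

lemma desc_disjoint {b u₁ u₂ : V} (h1 : T.parent u₁ = b ∧ u₁ ≠ b)
    (h2 : T.parent u₂ = b ∧ u₂ ≠ b) (hne : u₁ ≠ u₂) :
    Disjoint (T.desc u₁) (T.desc u₂) := by
  rw [Set.disjoint_left]
  intro w hw1 hw2
  have e1 := (T.depth_of_mem_desc_child h1.1 h1.2 hw1).2
  have e2 := (T.depth_of_mem_desc_child h2.1 h2.2 hw2).2
  exact hne (e1.symm.trans e2)

lemma desc_disjoint_pathEdges {b u' : V} (h1 : T.parent u' = b) (h2 : u' ≠ b) :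
    Disjoint (T.desc u') (T.pathEdges b) := by
  rw [Set.disjoint_left]
  intro w hw1 hw2
  have e1 := (T.depth_of_mem_desc_child h1 h2 hw1).1
  have e2 := (T.mem_pathEdges_iff.mp hw2).2.1
  omega

/-- Every non-root vertex is on the spine or in the branch of a child of `b`. -/
lemma cover_of_spined {b : V} (hbs : T.Spined b) :
    Set.univ \ {T.root} = T.pathEdges b ∪ ⋃ u' ∈ {u : V | T.parent u = b ∧ u ≠ b}, T.desc u' := by
  ext w
  simp only [Set.mem_diff, Set.mem_univ, true_and, Set.mem_singleton_iff, Set.mem_union,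
    Set.mem_iUnion, Set.mem_setOf_eq, exists_prop]
  constructor
  · intro hw
    rcases le_or_gt (T.depthV w) (T.depthV b) with hle | hlt
    · left
      rw [T.mem_pathEdges_iff]
      exact ⟨hw, hle, (T.spined_unique_at_depth hbs (T.depthV w) hle w rfl).symm⟩
    · right
      set u' := T.parent^[T.depthV w - (T.depthV b + 1)] w with hu'
      have hd : T.depthV u' = T.depthV b + 1 := by
        rw [hu', T.depthV_iterate (by omega)]; omega
      have hpar : T.parent u' = b := by
        have : T.parent^[T.depthV w - (T.depthV b + 1) + 1] w = T.parent u' := by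
          rw [Function.iterate_succ_apply']
        rw [show T.depthV w - (T.depthV b + 1) + 1 = T.depthV w - T.depthV b by omega] at this
        rw [← this]
        exact T.spined_ancestor_of_deep hbs (by omega)
      refine ⟨u', ⟨hpar, ?_⟩, _, rfl⟩
      intro he; rw [he] at hd; omega
  · rintro (hw | ⟨u', hu', hw⟩)
    · exact (T.mem_pathEdges_iff.mp hw).1
    · have := (T.depth_of_mem_desc_child hu'.1 hu'.2 hw).1
      intro hr
      rw [hr, T.depthV_eq_zero_iff.mpr rfl] at this
      omega

/-- Leaves lie in the branch of some child of `b`. -/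
lemma leaf_mem_desc {b : V} (hb2 : 2 ≤ T.childCount b) (hbs : T.Spined b) {w : V}
    (hw : T.IsLeaf w) :
    ∃ u' : V, (T.parent u' = b ∧ u' ≠ b) ∧ w ∈ T.desc u' := by
  have hdeep : T.depthV b < T.depthV w := by
    by_contra hle
    push_neg at hle
    -- w is an ancestor of b, hence has a child, contradicting leafness
    have hwa : w = T.parent^[T.depthV b - T.depthV w] b :=
      T.spined_unique_at_depth hbs _ hle w rfl
    have hcc : 1 ≤ T.childCount w := by
      by_cases hwb : w = b
      · subst hwb; omega
      · exact T.strict_ancestor_childCount_pos ⟨hwb, _, hwa.symm⟩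
    obtain ⟨c, hc1, hc2⟩ : {c : V | T.parent c = w ∧ c ≠ w}.Nonempty := by
      rw [← Set.ncard_pos (Set.toFinite _)]
      exact hcc
    exact hc2 (hw c hc1)
  have hwne : w ≠ T.root := by
    intro hr
    rw [hr, T.depthV_eq_zero_iff.mpr rfl] at hdeep
    omega
  have hcover := T.cover_of_spined hbs
  have hwmem : w ∈ Set.univ \ {T.root} := ⟨trivial, hwne⟩
  rw [hcover] at hwmem
  rcases hwmem with hpe | hun
  · have := (T.mem_pathEdges_iff.mp hpe).2.1
    omega
  · simp only [Set.mem_iUnion, Set.mem_setOf_eq, exists_prop] at hun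
    obtain ⟨u', hu', hmem⟩ := hun
    exact ⟨u', hu', hmem⟩

lemma iterate_trans {w z : V} {m n : ℕ} (h : T.parent^[m] w = z) :
    T.parent^[n] z = T.parent^[n + m] w := by
  rw [Function.iterate_add_apply, h]

/-- Path edges of a vertex in a branch lie in the branch or on the spine. -/
lemma pathEdges_subset_of_desc {b u' w : V} (hbs : T.Spined b)
    (hpar : T.parent u' = b) (hne : u' ≠ b) (hw : w ∈ T.desc u') :
    T.pathEdges w ⊆ T.pathEdges b ∪ T.desc u' := by
  obtain ⟨hdw, hwu⟩ := T.depth_of_mem_desc_child hpar hne hw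
  intro z hz
  rw [T.mem_pathEdges_iff] at hz
  obtain ⟨hzr, hzle, hzit⟩ := hz
  rcases le_or_gt (T.depthV z) (T.depthV b) with hle | hlt
  · left
    rw [T.mem_pathEdges_iff]
    refine ⟨hzr, hle, ?_⟩
    have hwb : T.parent^[T.depthV w - T.depthV b] w = b :=
      T.spined_ancestor_of_deep hbs (by omega)
    have := T.iterate_trans (n := T.depthV b - T.depthV z) hwb
    rw [show T.depthV b - T.depthV z + (T.depthV w - T.depthV b)
        = T.depthV w - T.depthV z by omega] at this
    rw [this, hzit]
  · right
    have hu'root : u' ≠ T.root := by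
      intro hr; rw [hr] at hpar hne; exact hne (T.parent_root.symm.trans hpar)
    have hdu' : T.depthV u' = T.depthV b + 1 := T.depthV_child hpar hne
    rw [T.mem_desc_iff hu'root, hdu']
    refine ⟨by omega, ?_⟩
    have := T.iterate_trans (n := T.depthV z - (T.depthV b + 1)) hzit
    rw [show T.depthV z - (T.depthV b + 1) + (T.depthV w - T.depthV z)
        = T.depthV w - (T.depthV b + 1) by omega, hwu] at this
    exact this

lemma ncard_biUnion_desc {b : V} (Q : Finset V) (hQ : ∀ u ∈ Q, T.parent u = b ∧ u ≠ b) :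
    (⋃ u ∈ Q, T.desc u).ncard = ∑ u ∈ Q, (T.desc u).ncard := by
  classical
  induction Q using Finset.induction with
  | empty => simp
  | @insert a Q ha ih =>
    rw [Finset.sum_insert ha]
    have hins : (⋃ u ∈ insert a Q, T.desc u) = T.desc a ∪ ⋃ u ∈ Q, T.desc u := by
      simp [Set.biUnion_insert]
    rw [hins, Set.ncard_union_eq ?_ (Set.toFinite _) (Set.toFinite _),
      ih (fun u hu => hQ u (Finset.mem_insert_of_mem hu))]
    · rw [Set.disjoint_iff_forall_ne]
      rintro x hx y hy rfl
      simp only [Set.mem_iUnion, exists_prop] at hy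
      obtain ⟨u, huQ, hyu⟩ := hy
      have hau : a ≠ u := by rintro rfl; exact ha huQ
      exact Set.disjoint_left.mp
        (T.desc_disjoint (hQ a (Finset.mem_insert_self a Q))
          (hQ u (Finset.mem_insert_of_mem huQ)) hau) hx hyu

lemma ncard_spine_union_desc {b : V} (Q : Finset V)
    (hQ : ∀ u ∈ Q, T.parent u = b ∧ u ≠ b) :
    (T.pathEdges b ∪ ⋃ u ∈ Q, T.desc u).ncard
      = T.depthV b + ∑ u ∈ Q, (T.desc u).ncard := by
  rw [Set.ncard_union_eq ?_ (Set.toFinite _) (Set.toFinite _), T.ncard_pathEdges,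
    T.ncard_biUnion_desc Q hQ]
  rw [Set.disjoint_iff_forall_ne]
  rintro x hx y hy rfl
  simp only [Set.mem_iUnion, exists_prop] at hy
  obtain ⟨u, huQ, hyu⟩ := hy
  exact Set.disjoint_left.mp (T.desc_disjoint_pathEdges (hQ u huQ).1 (hQ u huQ).2).symm hx hyu

/-- The edge count of the tree: spine plus branches. -/
lemma edgeCount_eq {b : V} (hbs : T.Spined b) (C : Finset V)
    (hC : ∀ u : V, u ∈ C ↔ T.parent u = b ∧ u ≠ b) :
    T.edgeCount = T.depthV b + ∑ u ∈ C, (T.desc u).ncard := by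
  have hcov : (Set.univ \ {T.root} : Set V) = T.pathEdges b ∪ ⋃ u ∈ C, T.desc u := by
    rw [T.cover_of_spined hbs]
    congr 1
    ext w
    simp only [Set.mem_iUnion, Set.mem_setOf_eq, exists_prop, Finset.mem_coe]
    constructor
    · rintro ⟨u, hu, hw⟩; exact ⟨u, (hC u).mpr hu, hw⟩
    · rintro ⟨u, hu, hw⟩; exact ⟨u, (hC u).mp hu, hw⟩
  have h1 : (Set.univ \ {T.root} : Set V).ncard = Fintype.card V - 1 := by
    rw [Set.ncard_diff_singleton_of_mem (Set.mem_univ _), Set.ncard_univ,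
      Nat.card_eq_fintype_card]
  rw [RTree.edgeCount, ← h1, hcov, T.ncard_spine_union_desc C (fun u hu => (hC u).mp hu)]

end RTree

/-- Lemma: the hulls of primary branches at capacity pairwise intersect
in a common subspace. Let `(T, f)` be a depth-decomposition of a vector matroid such
that `T` is not a rooted path and each primary branch of `T` is at capacity, and let `h`
be the depth of the common root of the primary branches.  Then there exists a subspace
`K` of dimension `h` such that the linear hulls of `Ŝᵢ` and `Ŝⱼ` intersect exactly in
`K` for every two distinct primary branches. -/
theorem exists_common_intersection_subspace (F W ι : Type) [Field F] [AddCommGroup W]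
    [Module F W] [Fintype ι] (v : ι → W) {V : Type} [Fintype V] [DecidableEq V]
    (T : RTree V) (f : ι → V)
    (hdd : IsDepthDecompOn (vecRk F v) (vecRk F v Set.univ) T f)
    (hnp : ¬ T.IsRootedPath)
    (hcap : ∀ u' : V, T.IsPrimaryBranch u' → AtCapacity (vecRk F v) T f u')
    (h : ℕ) (hh : ∀ u' : V, T.IsPrimaryBranch u' → T.depthV (T.parent u') = h) :
    ∃ K : Submodule F W, Module.finrank F K = h ∧
      ∀ u₁ u₂ : V, T.IsPrimaryBranch u₁ → T.IsPrimaryBranch u₂ → u₁ ≠ u₂ →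
        Submodule.span F (v '' {x | f x ∈ T.desc u₁}) ⊓
          Submodule.span F (v '' {x | f x ∈ T.desc u₂}) = K := by
  classical
  obtain ⟨b, hb2, hbs⟩ := T.exists_branching hnp
  set C : Finset V := Finset.univ.filter (fun u => T.parent u = b ∧ u ≠ b) with hCdef
  have hC : ∀ u : V, u ∈ C ↔ T.parent u = b ∧ u ≠ b := by
    intro u; simp [hCdef]
  have hprim : ∀ u : V, T.IsPrimaryBranch u ↔ u ∈ C := by
    intro u; rw [T.primary_iff_child hb2 hbs, ← hC]
  have hCcard : 2 ≤ C.card := by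
    have hs : {w : V | T.parent w = b ∧ w ≠ b} = ↑C := by
      ext w; simp [hC]
    rw [RTree.childCount, hs, Set.ncard_coe_finset] at hb2
    exact hb2
  obtain ⟨u₀, hu₀, u₁, hu₁, hu01⟩ := (Finset.one_lt_card (s := C)).mp (by omega)
  have hdb : T.depthV b = h := by
    have := hh u₀ ((hprim u₀).mpr hu₀)
    rwa [((hC u₀).mp hu₀).1] at this
  -- the subspaces
  set Sset : Finset V → Set ι := fun Q => {x | f x ∈ ⋃ u ∈ Q, T.desc u} with hSdef
  set A : Finset V → Submodule F W := fun Q => Submodule.span F (v '' Sset Q) with hAdef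
  set n : V → ℕ := fun u => (T.desc u).ncard with hndef
  have hfd : ∀ Y : Set ι, FiniteDimensional F (Submodule.span F (v '' Y)) :=
    fun Y => FiniteDimensional.span_of_finite F ((Set.toFinite Y).image v)
  have hfdA : ∀ Q, FiniteDimensional F (A Q) := fun Q => hfd _
  have hsingle : ∀ u : V, Sset {u} = {x | f x ∈ T.desc u} := by
    intro u; ext x; simp [hSdef]
  have hunion : ∀ Q₁ Q₂ : Finset V, A (Q₁ ∪ Q₂) = A Q₁ ⊔ A Q₂ := by
    intro Q₁ Q₂
    have : Sset (Q₁ ∪ Q₂) = Sset Q₁ ∪ Sset Q₂ := by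
      ext x
      simp only [hSdef, Set.mem_setOf_eq, Set.mem_iUnion, Set.mem_union, exists_prop,
        Finset.mem_union]
      constructor
      · rintro ⟨u, (h1 | h1), h2⟩
        · exact Or.inl ⟨u, h1, h2⟩
        · exact Or.inr ⟨u, h1, h2⟩
      · rintro (⟨u, h1, h2⟩ | ⟨u, h1, h2⟩)
        · exact ⟨u, Or.inl h1, h2⟩
        · exact ⟨u, Or.inr h1, h2⟩
    show Submodule.span F (v '' Sset (Q₁ ∪ Q₂))
      = Submodule.span F (v '' Sset Q₁) ⊔ Submodule.span F (v '' Sset Q₂)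
    rw [this, Set.image_union, Submodule.span_union]
  have hmono : ∀ Q₁ Q₂ : Finset V, Q₁ ⊆ Q₂ → A Q₁ ≤ A Q₂ := by
    intro Q₁ Q₂ hQ
    apply Submodule.span_mono
    apply Set.image_mono
    intro x hx
    simp only [hSdef, Set.mem_setOf_eq, Set.mem_iUnion, exists_prop] at hx ⊢
    obtain ⟨u, hu, hx⟩ := hx
    exact ⟨u, hQ hu, hx⟩
  -- rank upper bound for unions of branches
  have hupper : ∀ Q : Finset V, Q ⊆ C → Module.finrank F (A Q) ≤ h + ∑ u ∈ Q, n u := by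
    intro Q hQ
    have hrk := hdd.2.2 (Sset Q)
    have hsub : (⋃ x ∈ Sset Q, T.pathEdges (f x)) ⊆ T.pathEdges b ∪ ⋃ u ∈ Q, T.desc u := by
      intro z hz
      simp only [Set.mem_iUnion, exists_prop] at hz
      obtain ⟨x, hx, hz⟩ := hz
      simp only [hSdef, Set.mem_setOf_eq, Set.mem_iUnion, exists_prop] at hx
      obtain ⟨u, huQ, hxu⟩ := hx
      have hch := (hC u).mp (hQ huQ)
      rcases T.pathEdges_subset_of_desc hbs hch.1 hch.2 hxu hz with h1 | h1
      · exact Or.inl h1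
      · refine Or.inr ?_
        simp only [Set.mem_iUnion, exists_prop]
        exact ⟨u, huQ, h1⟩
    have hcard : (⋃ x ∈ Sset Q, T.pathEdges (f x)).ncard ≤ h + ∑ u ∈ Q, n u := by
      calc (⋃ x ∈ Sset Q, T.pathEdges (f x)).ncard
          ≤ (T.pathEdges b ∪ ⋃ u ∈ Q, T.desc u).ncard :=
            Set.ncard_le_ncard hsub (Set.toFinite _)
        _ = h + ∑ u ∈ Q, n u := by
            rw [T.ncard_spine_union_desc Q (fun u hu => (hC u).mp (hQ hu)), hdb]
    exact le_trans hrk hcard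
  -- dimension of a single branch hull (capacity)
  have hdimA : ∀ u ∈ C, Module.finrank F (A {u}) = n u + h := by
    intro u hu
    have hp : T.IsPrimaryBranch u := (hprim u).mpr hu
    have hc := hcap u hp
    rw [AtCapacity, hh u hp] at hc
    have hA : A {u} = Submodule.span F (v '' {x | f x ∈ T.desc u}) := by
      show Submodule.span F (v '' Sset {u}) = _
      rw [hsingle u]
    rw [hA]
    exact hc
  -- the branches cover everything
  have hScov : Sset C = Set.univ := by
    ext x
    simp only [Set.mem_univ, iff_true, hSdef, Set.mem_setOf_eq, Set.mem_iUnion, exists_prop]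
    obtain ⟨u', hu', hmem⟩ := T.leaf_mem_desc hb2 hbs (hdd.1 x)
    exact ⟨u', (hC u').mpr hu', hmem⟩
  have htotal : Module.finrank F (A C) = h + ∑ u ∈ C, n u := by
    have h1 : Module.finrank F (A C) = vecRk F v Set.univ := by
      show Module.finrank F (Submodule.span F (v '' Sset C)) = _
      rw [hScov]
      rfl
    rw [h1, ← hdd.2.1, T.edgeCount_eq hbs C hC, hdb]
  -- the candidate subspaces
  have hKle : ∀ u ∈ C, Module.finrank F (A (C.erase u) ⊓ A {u} : Submodule F W) ≤ h := by
    intro u hu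
    haveI := hfdA (C.erase u)
    haveI := hfdA {u}
    have hsum := Submodule.finrank_sup_add_finrank_inf_eq (A (C.erase u)) (A {u})
    have hCu : C.erase u ∪ {u} = C := by
      rw [Finset.union_comm, ← Finset.insert_eq, Finset.insert_erase hu]
    have hsup : A (C.erase u) ⊔ A {u} = A C := by rw [← hunion, hCu]
    have hers : ∑ x ∈ C.erase u, n x + n u = ∑ x ∈ C, n x := Finset.sum_erase_add C n hu
    have h1 := hupper (C.erase u) (Finset.erase_subset u C)
    have h2 := hdimA u hu
    rw [hsup, htotal] at hsum
    omega
  have hpair : ∀ u ∈ C, ∀ w ∈ C, w ≠ u →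
      h ≤ Module.finrank F (A {w} ⊓ A {u} : Submodule F W) := by
    intro u hu w hw hwu
    haveI := hfdA {w}
    haveI := hfdA {u}
    have hsum := Submodule.finrank_sup_add_finrank_inf_eq (A {w}) (A {u})
    have hsup : A {w} ⊔ A {u} = A ({w} ∪ {u}) := (hunion _ _).symm
    have hQsub : ({w} ∪ {u} : Finset V) ⊆ C := by
      intro z hz
      simp only [Finset.mem_union, Finset.mem_singleton] at hz
      rcases hz with rfl | rfl <;> assumption
    have h1 := hupper _ hQsub
    have hsumQ : ∑ x ∈ ({w} ∪ {u} : Finset V), n x = n w + n u := by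
      rw [← Finset.insert_eq, Finset.sum_insert (by simp [hwu]), Finset.sum_singleton]
    have h2 := hdimA u hu
    have h3 := hdimA w hw
    rw [hsup] at hsum
    omega
  have hKeq : ∀ u ∈ C, ∀ w ∈ C, w ≠ u →
      A {w} ⊓ A {u} = A (C.erase u) ⊓ A {u} := by
    intro u hu w hw hwu
    haveI := hfdA (C.erase u)
    haveI := hfdA {u}
    apply Submodule.eq_of_le_of_finrank_le
    · refine inf_le_inf_right _ (hmono _ _ ?_)
      simp only [Finset.singleton_subset_iff, Finset.mem_erase]
      exact ⟨hwu, hw⟩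
    · exact le_trans (hKle u hu) (hpair u hu w hw hwu)
  refine ⟨A (C.erase u₀) ⊓ A {u₀}, ?_, ?_⟩
  · have e1 := hKeq u₀ hu₀ u₁ hu₁ (Ne.symm hu01)
    have h1 := hpair u₀ hu₀ u₁ hu₁ (Ne.symm hu01)
    have h2 := hKle u₀ hu₀
    rw [e1] at h1
    omega
  · intro a₁ a₂ hp1 hp2 hne
    have ha₁ : a₁ ∈ C := (hprim a₁).mp hp1
    have ha₂ : a₂ ∈ C := (hprim a₂).mp hp2
    have hA1 : A {a₁} = Submodule.span F (v '' {x | f x ∈ T.desc a₁}) := by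
      show Submodule.span F (v '' Sset {a₁}) = _
      rw [hsingle]
    have hA2 : A {a₂} = Submodule.span F (v '' {x | f x ∈ T.desc a₂}) := by
      show Submodule.span F (v '' Sset {a₂}) = _
      rw [hsingle]
    rw [← hA1, ← hA2]
    by_cases h0 : a₂ = u₀
    · rw [h0]
      exact hKeq u₀ hu₀ a₁ ha₁ (fun he => hne (he.trans h0.symm))
    · have e1 := hKeq a₂ ha₂ a₁ ha₁ hne
      have e2 := hKeq a₂ ha₂ u₀ hu₀ (fun he => h0 he.symm)
      have e3 := hKeq u₀ hu₀ a₂ ha₂ h0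
      rw [e1, ← e2, inf_comm (A {u₀}) (A {a₂}), e3]
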